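/- Let J be an ideal of a Noetherian ring R with J^{(n)} = J^n for all n ≥ 0 (symbolic powers equal ordinary powers). Then Ass(J^n/J^{n+1}) ⊆ Min(R/J) for every n ≥ 0, and consequently the associated graded ring G(J) = ⊕_{n≥0} J^n/J^{n+1} is torsion-free as an R/J-module. -/

import Mathlib

open IsLocalRing Filter Asymptotics

noncomputable section

/-- Minimal number of generators of a module. -/
noncomputable def muMod (R : Type*) [Semiring R] (M : Type*) [AddCommMonoid M] [Module R M] : ℕ :=
  sInf {n : ℕ | ∃ s : Finset M, s.card = n ∧ Submodule.span R (s : Set M) = ⊤}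

/-- The length of a module, as the Krull dimension of its lattice of submodules. -/
noncomputable def lengthM (R : Type*) [Semiring R] (M : Type*) [AddCommMonoid M] [Module R M] :
    WithBot ℕ∞ :=
  Order.krullDim (Submodule R M)

/-- The length of a module, as an extended nonnegative real. -/
noncomputable def lenE (R : Type*) [Semiring R] (M : Type*) [AddCommMonoid M] [Module R M] :
    ENNReal :=
  WithTop.map (fun n : ℕ => (n : NNReal)) (WithBot.unbotD 0 (lengthM R M))

/-- The Hilbert–Samuel multiplicity `e(M) = lim r! λ(M/𝔪ⁿM)/nʳ` of a module `M`
whose dimension is `r`, over a Noetherian local ring. -/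
noncomputable def eMult (R : Type*) [CommRing R] [IsLocalRing R] (M : Type*) [AddCommGroup M]
    [Module R M] (r : ℕ) : ℝ :=
  (Filter.limsup (fun n : ℕ =>
      (Nat.factorial r : ENNReal) * lenE R (M ⧸ ((maximalIdeal R ^ n) • (⊤ : Submodule R M)))
        / (n : ENNReal) ^ r) Filter.atTop).toReal

/-- The (Krull) dimension of a module, i.e. `dim R/ann M`. -/
noncomputable def dimMod (R : Type*) [CommRing R] (M : Type*) [AddCommGroup M] [Module R M] :
    WithBot ℕ∞ :=
  ringKrullDim (R ⧸ Module.annihilator R M)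

/-- The depth of a module over a local ring: the longest length of a regular sequence on `M`
consisting of elements of the maximal ideal. -/
noncomputable def depthM (R : Type*) [CommRing R] [IsLocalRing R] (M : Type*) [AddCommGroup M]
    [Module R M] : ℕ :=
  sSup {n : ℕ | ∃ rs : List R, rs.length = n ∧ (∀ r ∈ rs, r ∈ maximalIdeal R) ∧
    RingTheory.Sequence.IsRegular M rs}

/-- The zeroth local cohomology `H⁰_𝔪(M)`, i.e. the `𝔪`-torsion submodule of `M`. -/
noncomputable def H0 (R : Type*) [CommRing R] [IsLocalRing R] (M : Type*) [AddCommGroup M]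
    [Module R M] : Submodule R M :=
  ⨆ n : ℕ, Submodule.torsionBySet R M ((maximalIdeal R ^ n : Ideal R) : Set R)

/-- The analytic spread of a system of ideals `F`, namely
`min {t ∈ ℝ | μ(F n) = O(n^(t-1))}`. -/
noncomputable def spreadOf {R : Type*} [CommRing R] (F : ℕ → Ideal R) : ℝ :=
  sInf {t : ℝ | (fun n : ℕ => (muMod R ↥(F n) : ℝ)) =O[Filter.atTop]
    fun n : ℕ => (n : ℝ) ^ (t - 1)}

/-- The analytic spread `ℓ(I)` of an ideal, via the growth rate of `μ(Iⁿ)`. -/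
noncomputable def aspread {R : Type*} [CommRing R] (I : Ideal R) : ℝ :=
  spreadOf fun n => I ^ n

/-- The `n`-th symbolic power of `I`: the intersection over the minimal primes `p` of `I`
of `Iⁿ R_p ∩ R`. -/
noncomputable def symbPow {R : Type*} [CommRing R] (I : Ideal R) (n : ℕ) : Ideal R :=
  ⨅ (p : Ideal R) (hp : p ∈ I.minimalPrimes),
    haveI : p.IsPrime := hp.1.1
    Ideal.comap (algebraMap R (Localization.AtPrime p))
      (Ideal.map (algebraMap R (Localization.AtPrime p)) (I ^ n))

/-- The symbolic analytic spread `sℓ(I)`, via the growth rate of `μ(I⁽ⁿ⁾)`. -/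
noncomputable def sspread {R : Type*} [CommRing R] (I : Ideal R) : ℝ :=
  spreadOf fun n => symbPow I n

/-- The arithmetic rank of an ideal: the least number of elements generating an ideal
with the same radical. -/
noncomputable def ara {R : Type*} [CommRing R] (I : Ideal R) : ℕ :=
  sInf {u : ℕ | ∃ s : Finset R, s.card = u ∧ (Ideal.span (s : Set R)).radical = I.radical}

/-- The height of an ideal: the infimum of the heights of its minimal primes. -/
noncomputable def heightI {R : Type*} [CommRing R] (I : Ideal R) : ℕ∞ :=
  sInf {h : ℕ∞ | ∃ pp : PrimeSpectrum R, pp.asIdeal ∈ I.minimalPrimes ∧ Order.height pp = h}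

/-- The saturation `(Iⁿ : 𝔪^∞)` of the `n`-th power of `I`. -/
noncomputable def satPow {R : Type*} [CommRing R] [IsLocalRing R] (I : Ideal R) (n : ℕ) :
    Ideal R :=
  ⨆ k : ℕ, Submodule.colon (I ^ n : Ideal R) ((maximalIdeal R ^ k : Ideal R) : Set R)

/-- The integral closure of an ideal `I`, as a set: elements satisfying an equation
`r^k + a₁ r^(k-1) + ⋯ + a_k = 0` with `aᵢ ∈ Iⁱ`. -/
def idealIC {R : Type*} [CommRing R] (I : Ideal R) : Set R :=
  {r | ∃ (k : ℕ) (a : ℕ → R), 0 < k ∧ (∀ i, 1 ≤ i → i ≤ k → a i ∈ I ^ i) ∧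
      r ^ k + ∑ i ∈ Finset.Icc 1 k, a i * r ^ (k - i) = 0}

/-- The quotient module `J/(I ∩ J)`, i.e. `J/I` when `I ≤ J`. -/
abbrev subQuot {R : Type*} [CommRing R] (J I : Ideal R) :=
  ↥J ⧸ Submodule.comap J.subtype I

/-- A local ring is analytically unramified if its completion is reduced. -/
def AnalyticallyUnramified (R : Type*) [CommRing R] [IsLocalRing R] : Prop :=
  IsReduced (AdicCompletion (maximalIdeal R) R)

/-- A local ring is formally equidimensional if every minimal prime of its completion
has the same dimension. -/
def FormallyEquidimensional (R : Type*) [CommRing R] [IsLocalRing R] : Prop :=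
  ∀ p ∈ minimalPrimes (AdicCompletion (maximalIdeal R) R),
    ringKrullDim ((AdicCompletion (maximalIdeal R) R) ⧸ p) =
      ringKrullDim (AdicCompletion (maximalIdeal R) R)

end
/-- If `J⁽ⁿ⁾ = Jⁿ` for all `n`, then `Ass(Jⁿ/Jⁿ⁺¹) ⊆ Min(R/J)` for every `n`, and the
associated graded ring `G(J) = ⊕ Jⁿ/Jⁿ⁺¹` is torsion-free over `R/J`: every element of `R`
that is a zerodivisor on some graded piece lies in a minimal prime of `J`. -/
theorem stmt8 (R : Type) [CommRing R] [IsNoetherianRing R] (J : Ideal R)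
    (hsymb : ∀ n : ℕ, symbPow J n = J ^ n) :
    (∀ n : ℕ, associatedPrimes R (subQuot (J ^ n) (J ^ (n + 1))) ⊆ J.minimalPrimes) ∧
    (∀ r : R,
      (∃ (n : ℕ) (x : subQuot (J ^ n) (J ^ (n + 1))), x ≠ 0 ∧ r • x = 0) →
      ∃ p ∈ J.minimalPrimes, r ∈ p) := by
  have key : ∀ n : ℕ, associatedPrimes R (subQuot (J ^ n) (J ^ (n + 1))) ⊆ J.minimalPrimes := by
    intro n p hp
    obtain ⟨hprime, x, hx⟩ := isAssociatedPrime_iff.mp hp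
    obtain ⟨y, rfl⟩ := Submodule.Quotient.mk_surjective _ x
    -- membership in p is multiplication into J^(n+1)
    have hmem : ∀ r : R, r ∈ p ↔ r * (y : R) ∈ J ^ (n + 1) := by
      intro r
      rw [hx, Submodule.mem_colon_singleton, Submodule.mem_bot, ← Submodule.Quotient.mk_smul,
        Submodule.Quotient.mk_eq_zero, Submodule.mem_comap]
      rfl
    -- J ≤ p
    have hJp : J ≤ p := by
      intro a ha
      rw [hmem]
      rw [mul_comm, pow_succ]
      exact Ideal.mul_mem_mul y.2 ha
    -- y ∉ J^(n+1)
    have hy : (y : R) ∉ J ^ (n + 1) := by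
      have := hprime.ne_top
      intro h
      exact this (Ideal.eq_top_iff_one _ |>.mpr ((hmem 1).mpr (by simpa using h)))
    -- find a minimal prime q with y not in the localization preimage
    have hy' : (y : R) ∉ symbPow J (n + 1) := by rw [hsymb]; exact hy
    rw [symbPow, Submodule.mem_iInf] at hy'
    push_neg at hy'
    obtain ⟨q, hy''⟩ := hy'
    rw [Submodule.mem_iInf] at hy''
    push_neg at hy''
    obtain ⟨hq, hyq⟩ := hy''
    haveI : q.IsPrime := hq.1.1
    -- p ≤ q
    have hpq : p ≤ q := by
      intro a ha
      by_contra haq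
      have hay : a * (y : R) ∈ J ^ (n + 1) := (hmem a).mp ha
      have h1 : (algebraMap R (Localization.AtPrime q)) (a * (y : R)) ∈
          Ideal.map (algebraMap R (Localization.AtPrime q)) (J ^ (n + 1)) :=
        Ideal.mem_map_of_mem _ hay
      have hu : IsUnit ((algebraMap R (Localization.AtPrime q)) a) :=
        IsLocalization.AtPrime.isUnit_to_map_iff (Localization.AtPrime q) q a |>.mpr haq
      apply hyq
      rw [Ideal.mem_comap]
      obtain ⟨u, hu'⟩ := hu
      have : (algebraMap R (Localization.AtPrime q)) (y : R) =
          ↑u⁻¹ * ((algebraMap R (Localization.AtPrime q)) (a * (y : R))) := by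
        rw [map_mul, ← hu', ← mul_assoc]
        simp
      rw [this]
      exact Ideal.mul_mem_left _ _ h1
    -- conclude p = q
    have : q ≤ p := hq.2 ⟨hprime, hJp⟩ hpq
    have hpe : p = q := le_antisymm hpq this
    rw [hpe]
    exact hq
  refine ⟨key, ?_⟩
  rintro r ⟨n, x, hx, hrx⟩
  haveI : IsNoetherian R ↥(J ^ n) := isNoetherian_submodule' _
  obtain ⟨P, hP, hle⟩ := exists_le_isAssociatedPrime_of_isNoetherianRing R x hx
  exact ⟨P, key n hP, hle (Submodule.mem_colon_singleton.mpr ((Submodule.mem_bot R).mpr hrx))⟩
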